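/- Let k < 0, c ∈ ℝ, f ∈ L¹(0,1). The boundary value problem x'(t) = -(k/t)x(t) + f(t) a.e. on (0,1], x(1) = c, has a unique solution in the space D₋ = {x ∈ AC[0,1] : x(0)=0, ∫_0^1 |x(t)|/t dt < ∞}, given by x(t) = t^{|k|}·(c - ∫_t^1 s^{-|k|} f(s) ds). -/

import Mathlib

open MeasureTheory Set Filter Topology


-- integral of a * s^(a-1) over Ioo 0 u
lemma pow_int {a : ℝ} (ha : 0 < a) {u : ℝ} (hu : 0 < u) :
    ∫ s in Ioo (0:ℝ) u, a * s ^ (a - 1) = u ^ a := by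
  rw [← integral_Ioc_eq_integral_Ioo, ← intervalIntegral.integral_of_le hu.le]
  rw [intervalIntegral.integral_const_mul, _root_.integral_rpow (Or.inl (by linarith))]
  rw [sub_add_cancel, Real.zero_rpow (ne_of_gt ha)]
  field_simp
  rw [sub_zero]

lemma rpow_integrableOn {a : ℝ} (ha : 0 < a) (T : ℝ) :
    IntegrableOn (fun s : ℝ => a * s ^ (a - 1)) (Ioc 0 T) := by
  have := (intervalIntegral.intervalIntegrable_rpow' (a := 0) (b := T) (r := a - 1)
    (by linarith)).1
  exact (this.const_mul a)

lemma meas_rpow (r : ℝ) : Measurable fun x : ℝ => x ^ r := by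
  have hdef : (fun x : ℝ => x ^ r) = fun x =>
      if 0 < x then Real.exp (Real.log x * r)
      else if x = 0 then (if r = 0 then 1 else 0)
      else Real.exp (Real.log x * r) * Real.cos (r * Real.pi) := by
    funext x
    rcases lt_trichotomy x 0 with h | h | h
    · rw [if_neg (by linarith), if_neg (by linarith), Real.rpow_def_of_neg h]
    · subst h
      rw [if_neg (lt_irrefl 0), if_pos rfl]
      by_cases hr : r = 0
      · simp [hr]
      · simp [Real.zero_rpow hr, hr]
    · rw [if_pos h, Real.rpow_def_of_pos h]
  rw [hdef]
  refine Measurable.ite measurableSet_Ioi ?_ (Measurable.ite (measurableSet_singleton 0) ?_ ?_)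
  · exact (Real.measurable_exp.comp (Real.measurable_log.mul_const r))
  · exact measurable_const
  · exact ((Real.measurable_exp.comp (Real.measurable_log.mul_const r)).mul_const _)

lemma aux_key {a : ℝ} (ha : 0 < a) {f₀ : ℝ → ℝ} (hm : Measurable f₀)
    (hi : Integrable f₀ (volume : Measure ℝ)) {T : ℝ} (hT : 0 < T) :
    IntegrableOn (fun s => a * s ^ (a - 1) * ∫ u in Ioc s T, u ^ (-a) * f₀ u) (Ioc 0 T)
    ∧ ∫ s in Ioc 0 T, a * s ^ (a - 1) * ∫ u in Ioc s T, u ^ (-a) * f₀ u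
      = ∫ u in Ioc 0 T, f₀ u := by
  set μ : Measure ℝ := volume.restrict (Ioc 0 T) with hμ
  set S : Set (ℝ × ℝ) := {q : ℝ × ℝ | q.1 < q.2 ∧ q.2 ≤ T} with hS
  have hSm : MeasurableSet S := by
    apply MeasurableSet.inter
    · exact measurableSet_lt measurable_fst measurable_snd
    · exact measurable_snd measurableSet_Iic
  set F : ℝ × ℝ → ℝ := fun q => a * q.1 ^ (a - 1) * (q.2 ^ (-a) * f₀ q.2) with hF
  have hFm : Measurable F := by
    apply Measurable.mul
    · exact ((meas_rpow (a-1)).comp measurable_fst).const_mul a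
    · exact ((meas_rpow (-a)).comp measurable_snd).mul (hm.comp measurable_snd)
  set Φ : ℝ × ℝ → ℝ := S.indicator F with hΦ
  have hΦm : Measurable Φ := hFm.indicator hSm
  -- slices in s
  have hslice : ∀ u : ℝ, (fun s => Φ (s, u))
      = fun s => (if u ≤ T then 1 else 0) * ((Iio u).indicator (fun s => a * s ^ (a - 1)) s
          * (u ^ (-a) * f₀ u)) := by
    intro u
    funext s
    by_cases h1 : u ≤ T <;> by_cases h2 : s < u <;>
      simp [hΦ, hS, Set.indicator_apply, h1, h2, hF] <;> ring
  -- norm of slices over s, for u ∈ Ioc 0 T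
  have hnorm : ∀ u ∈ Ioc (0:ℝ) T, (∫ s, ‖Φ (s, u)‖ ∂μ) = |f₀ u| := by
    intro u hu
    have h1 : ∀ s ∈ Ioc (0:ℝ) T, ‖Φ (s, u)‖
        = (Iio u).indicator (fun s => a * s ^ (a - 1)) s * |u ^ (-a) * f₀ u| := by
      intro s hs
      rw [congrFun (hslice u) s]
      rw [if_pos hu.2]
      by_cases h2 : s < u
      · simp only [Set.indicator_of_mem (mem_Iio.mpr h2)]
        rw [one_mul, Real.norm_eq_abs, abs_mul]
        congr 1
        exact abs_of_pos (mul_pos ha (Real.rpow_pos_of_pos hs.1 _))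
      · simp [Set.indicator_of_notMem, h2, mem_Iio]
    rw [setIntegral_congr_fun measurableSet_Ioc h1]
    rw [integral_mul_const, setIntegral_indicator measurableSet_Iio]
    have : Ioc (0:ℝ) T ∩ Iio u = Ioo 0 u := by
      ext s; constructor
      · rintro ⟨⟨h1, h2⟩, h3⟩; exact ⟨h1, h3⟩
      · rintro ⟨h1, h2⟩; exact ⟨⟨h1, le_trans (le_of_lt h2) hu.2⟩, h2⟩
    rw [this, pow_int ha hu.1]
    rw [← abs_of_pos (Real.rpow_pos_of_pos hu.1 a), ← abs_mul]
    rw [show u ^ a * (u ^ (-a) * f₀ u) = f₀ u by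
      rw [← mul_assoc, ← Real.rpow_add hu.1]; simp]
  have hΦint : Integrable Φ (μ.prod μ) := by
    rw [integrable_prod_iff' (hΦm.aestronglyMeasurable)]
    constructor
    · refine Eventually.of_forall (fun u => ?_)
      rw [hslice u]
      apply Integrable.const_mul
      apply Integrable.mul_const
      exact ((rpow_integrableOn ha T).indicator measurableSet_Iio)
    · apply Integrable.congr (f := fun u => |f₀ u|)
      · exact (hi.abs).integrableOn
      · exact (ae_restrict_iff' measurableSet_Ioc).2
          (Eventually.of_forall (fun u hu => (hnorm u hu).symm))
  constructor
  · apply (hΦint.integral_prod_left).congr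
    refine (ae_restrict_iff' measurableSet_Ioc).2 (Eventually.of_forall (fun s hs => ?_))
    have : ∀ u : ℝ, Φ (s, u) = a * s ^ (a - 1) * (Ioc s T).indicator (fun u => u ^ (-a) * f₀ u) u := by
      intro u
      by_cases h : u ∈ Ioc s T
      · rw [Set.indicator_of_mem h, hΦ, Set.indicator_of_mem]
        exact ⟨h.1, h.2⟩
      · rw [Set.indicator_of_notMem h, hΦ, Set.indicator_of_notMem, mul_zero]
        intro hc; exact h ⟨hc.1, hc.2⟩
    simp only [this]
    rw [integral_const_mul, setIntegral_indicator measurableSet_Ioc,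
      inter_eq_self_of_subset_right (Ioc_subset_Ioc_left hs.1.le)]
  · have swap := integral_integral_swap (f := fun s u => Φ (s, u)) (μ := μ) (ν := μ) hΦint
    have lhs : ∫ s, (∫ u, Φ (s, u) ∂μ) ∂μ
        = ∫ s in Ioc 0 T, a * s ^ (a - 1) * ∫ u in Ioc s T, u ^ (-a) * f₀ u := by
      apply setIntegral_congr_fun measurableSet_Ioc
      intro s hs
      have : ∀ u : ℝ, Φ (s, u) = a * s ^ (a - 1) * (Ioc s T).indicator (fun u => u ^ (-a) * f₀ u) u := by
        intro u
        by_cases h : u ∈ Ioc s T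
        · rw [Set.indicator_of_mem h, hΦ, Set.indicator_of_mem]
          exact ⟨h.1, h.2⟩
        · rw [Set.indicator_of_notMem h, hΦ, Set.indicator_of_notMem, mul_zero]
          intro hc; exact h ⟨hc.1, hc.2⟩
      simp only [this]
      rw [integral_const_mul, setIntegral_indicator measurableSet_Ioc,
        inter_eq_self_of_subset_right (Ioc_subset_Ioc_left hs.1.le)]
    have rhs : ∫ u, (∫ s, Φ (s, u) ∂μ) ∂μ = ∫ u in Ioc 0 T, f₀ u := by
      apply setIntegral_congr_fun measurableSet_Ioc
      intro u hu
      show (∫ s, Φ (s, u) ∂μ) = f₀ u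
      rw [hslice u, if_pos hu.2]
      simp only [one_mul]
      rw [integral_mul_const, setIntegral_indicator measurableSet_Iio]
      have : Ioc (0:ℝ) T ∩ Iio u = Ioo 0 u := by
        ext s; constructor
        · rintro ⟨⟨h1, h2⟩, h3⟩; exact ⟨h1, h3⟩
        · rintro ⟨h1, h2⟩; exact ⟨⟨h1, le_trans (le_of_lt h2) hu.2⟩, h2⟩
      rw [this, pow_int ha hu.1]
      rw [show u ^ a * (u ^ (-a) * f₀ u) = u ^ a * u ^ (-a) * f₀ u by ring,
        ← Real.rpow_add hu.1]
      simp
    rw [← lhs, ← rhs]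
    exact swap


lemma loglem (n : ℕ) {t : ℝ} (ht : 0 < t) (ht1 : t ≤ 1) :
    ∫ s in t..1, (Real.log s⁻¹) ^ n / s = (Real.log t⁻¹) ^ (n + 1) / (n + 1) := by
  have key : ∫ s in t..1, (-Real.log s) ^ n / s
      = (-Real.log t) ^ (n + 1) / (n + 1) := by
    have h := intervalIntegral.integral_eq_sub_of_hasDerivAt
      (f := fun s : ℝ => -((-Real.log s) ^ (n + 1)) / (n + 1))
      (f' := fun s : ℝ => (-Real.log s) ^ n / s) (a := t) (b := 1) ?_ ?_
    · rw [h]; simp [Real.log_one]; ring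
    · intro s hs
      rw [uIcc_of_le ht1] at hs
      have hs0 : 0 < s := lt_of_lt_of_le ht hs.1
      have hlog : HasDerivAt (fun s : ℝ => -Real.log s) (-(1/s)) s := by
        rw [one_div]; exact (Real.hasDerivAt_log (ne_of_gt hs0)).neg
      have hpow := (hlog.pow (n + 1))
      have := (hpow.neg).div_const ((n : ℝ) + 1)
      refine this.congr_deriv ?_
      push_cast
      field_simp
    · apply ContinuousOn.intervalIntegrable
      rw [uIcc_of_le ht1]
      apply ContinuousOn.div
      · exact (Real.continuousOn_log.mono (fun s hs => ne_of_gt (lt_of_lt_of_le ht hs.1))).neg.pow n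
      · exact continuousOn_id
      · exact fun s hs => ne_of_gt (lt_of_lt_of_le ht hs.1)
  simp only [Real.log_inv]
  exact key


/-- For `k < 0`, the boundary value problem `x' = -(k/t) x + f`, `x 1 = c`, has a
unique solution in `D₋ = {x ∈ AC[0,1] : x 0 = 0, ∫_0^1 |x|/t dt < ∞}`, given by
`x t = t^{|k|} (c - ∫_t^1 s^{-|k|} f s ds)`. -/
theorem stmt_11 (k : ℝ) (hk : k < 0) (c : ℝ) (f : ℝ → ℝ)
    (hf : IntegrableOn f (Ioc 0 1)) :
    ∃ x : ℝ → ℝ,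
      (x 0 = 0 ∧ x 1 = c ∧ IntegrableOn (fun t => |x t| / t) (Ioc 0 1) ∧
        ∃ g : ℝ → ℝ, IntegrableOn g (Ioc 0 1) ∧
          (∀ t ∈ Icc (0:ℝ) 1, x t = ∫ s in Ioc (0:ℝ) t, g s) ∧
          (∀ᵐ t ∂(volume.restrict (Ioc (0:ℝ) 1)), g t = -(k / t) * x t + f t)) ∧
      (∀ y : ℝ → ℝ,
        (y 0 = 0 ∧ y 1 = c ∧ IntegrableOn (fun t => |y t| / t) (Ioc 0 1) ∧
          ∃ g : ℝ → ℝ, IntegrableOn g (Ioc 0 1) ∧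
            (∀ t ∈ Icc (0:ℝ) 1, y t = ∫ s in Ioc (0:ℝ) t, g s) ∧
            (∀ᵐ t ∂(volume.restrict (Ioc (0:ℝ) 1)), g t = -(k / t) * y t + f t)) →
        ∀ t ∈ Icc (0:ℝ) 1, y t = x t) ∧
      (∀ t ∈ Ioc (0:ℝ) 1, x t = t ^ |k| * (c - ∫ s in t..1, s ^ (-|k|) * f s)) := by
  set a : ℝ := -k with hadef
  have ha : 0 < a := by simp [hadef]; linarith
  have hak : |k| = a := abs_of_neg hk
  -- measurable modification of f
  obtain ⟨f₁, hf₁m, hff₁⟩ : ∃ f₁, StronglyMeasurable f₁ ∧ f =ᵐ[volume.restrict (Ioc 0 1)] f₁ :=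
    ⟨hf.1.mk f, hf.1.stronglyMeasurable_mk, hf.1.ae_eq_mk⟩
  set f₀ : ℝ → ℝ := (Ioc 0 1).indicator f₁ with hf₀def
  have hf₀m : Measurable f₀ := (hf₁m.measurable).indicator measurableSet_Ioc
  have hff₀ : f =ᵐ[volume.restrict (Ioc (0:ℝ) 1)] f₀ :=
    hff₁.trans (indicator_ae_eq_restrict measurableSet_Ioc).symm
  have hf₀i : Integrable f₀ (volume : Measure ℝ) := by
    rw [hf₀def, integrable_indicator_iff measurableSet_Ioc]
    exact (hf.congr hff₁)
  -- definitions
  set F : ℝ → ℝ := fun t => ∫ u in Ioc t 1, u ^ (-a) * f₀ u with hFdef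
  set x : ℝ → ℝ := fun t => t ^ a * (c - F t) with hxdef
  set g : ℝ → ℝ := fun t => a * t ^ (a - 1) * (c - F t) + f t with hgdef
  set g₀ : ℝ → ℝ := fun t => a * t ^ (a - 1) * (c - F t) + f₀ t with hg₀def
  have K1 := aux_key ha hf₀m hf₀i (T := 1) one_pos
  -- integrability of the weighted integrand
  have hwi : ∀ {s t : ℝ}, 0 < s →
      IntegrableOn (fun u => u ^ (-a) * f₀ u) (Ioc s t) volume := by
    intro s t hs
    apply Integrable.mono' ((hf₀i.abs.const_mul (s ^ (-a))).integrableOn)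
    · exact (((meas_rpow (-a)).mul hf₀m).aestronglyMeasurable).restrict
    · refine (ae_restrict_iff' measurableSet_Ioc).2 (Eventually.of_forall fun u hu => ?_)
      have hu0 : 0 < u := lt_trans hs hu.1
      rw [Real.norm_eq_abs, abs_mul, abs_of_pos (Real.rpow_pos_of_pos hu0 _)]
      exact mul_le_mul_of_nonneg_right
        (Real.rpow_le_rpow_of_nonpos hs hu.1.le (by linarith)) (abs_nonneg _)
  have hwiI : ∀ {s t : ℝ}, 0 < s → s ≤ t →
      IntervalIntegrable (fun u => u ^ (-a) * f₀ u) volume s t := by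
    intro s t hs hst
    rw [intervalIntegrable_iff, uIoc_of_le hst]
    exact hwi hs
  -- additivity of F
  have hFadd : ∀ {s t : ℝ}, 0 < s → s ≤ t → t ≤ 1 →
      F s = (∫ u in Ioc s t, u ^ (-a) * f₀ u) + F t := by
    intro s t hs hst ht1
    have h1 := intervalIntegral.integral_add_adjacent_intervals
      (hwiI hs hst) (hwiI (lt_of_lt_of_le hs hst) ht1)
    rw [intervalIntegral.integral_of_le hst, intervalIntegral.integral_of_le ht1,
      intervalIntegral.integral_of_le (le_trans hst ht1)] at h1
    exact h1.symm
  -- x 0 = 0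
  have hx0 : x 0 = 0 := by
    rw [hxdef]; simp [Real.zero_rpow (ne_of_gt ha)]
  -- x 1 = c
  have hx1 : x 1 = c := by
    rw [hxdef]; simp [hFdef, Real.one_rpow]
  -- integral of a s^(a-1) over Ioc
  have hIoc_pow : ∀ {u : ℝ}, 0 < u → (∫ s in Ioc (0:ℝ) u, a * s ^ (a - 1)) = u ^ a := by
    intro u hu
    rw [integral_Ioc_eq_integral_Ioo]; exact pow_int ha hu
  -- representation: for t ∈ Icc 0 1, x t = ∫_{Ioc 0 t} g
  have hrep : ∀ t ∈ Icc (0:ℝ) 1, x t = ∫ s in Ioc (0:ℝ) t, g s := by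
    rintro t ⟨ht0, ht1⟩
    rcases eq_or_lt_of_le ht0 with h | ht0
    · rw [← h]; simpa using hx0
    have Kt := aux_key ha hf₀m hf₀i ht0
    -- pass from g to g₀
    have e0 : ∫ s in Ioc (0:ℝ) t, g s = ∫ s in Ioc (0:ℝ) t, g₀ s := by
      apply integral_congr_ae
      have := ae_restrict_of_ae_restrict_of_subset (Ioc_subset_Ioc_right ht1) hff₀
      filter_upwards [this] with s hs
      rw [hgdef, hg₀def]; simp only; rw [hs]
    have i2 : IntegrableOn (fun s => a * s ^ (a - 1) * F s) (Ioc 0 t) volume :=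
      K1.1.mono_set (Ioc_subset_Ioc_right ht1)
    have i1 : IntegrableOn (fun s => a * s ^ (a - 1) * c) (Ioc 0 t) volume :=
      (rpow_integrableOn ha t).mul_const c
    have if₀ : IntegrableOn f₀ (Ioc 0 t) volume := hf₀i.integrableOn
    have e1 : ∫ s in Ioc (0:ℝ) t, g₀ s
        = (∫ s in Ioc (0:ℝ) t, (a * s ^ (a - 1) * c - a * s ^ (a - 1) * F s))
          + ∫ s in Ioc (0:ℝ) t, f₀ s := by
      have i12 : IntegrableOn
          (fun s => a * s ^ (a - 1) * c - a * s ^ (a - 1) * F s) (Ioc 0 t) volume := i1.sub i2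
      rw [← integral_add i12 if₀]
      apply integral_congr_ae
      refine Eventually.of_forall fun s => ?_
      rw [hg₀def]; simp only; ring
    have e2 : ∫ s in Ioc (0:ℝ) t, (a * s ^ (a - 1) * c - a * s ^ (a - 1) * F s)
        = c * t ^ a - (∫ s in Ioc (0:ℝ) t, a * s ^ (a - 1) * F s) := by
      rw [integral_sub i1 i2, integral_mul_const, hIoc_pow ht0]
      ring
    have e3 : ∫ s in Ioc (0:ℝ) t, a * s ^ (a - 1) * F s
        = (∫ u in Ioc (0:ℝ) t, f₀ u) + t ^ a * F t := by
      have congr1 : ∀ s ∈ Ioc (0:ℝ) t, a * s ^ (a - 1) * F s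
          = a * s ^ (a - 1) * (∫ u in Ioc s t, u ^ (-a) * f₀ u)
            + a * s ^ (a - 1) * F t := by
        intro s hs
        rw [hFadd hs.1 hs.2 ht1]
        ring
      rw [setIntegral_congr_fun measurableSet_Ioc congr1, integral_add Kt.1
        ((rpow_integrableOn ha t).mul_const (F t)), Kt.2, integral_mul_const,
        hIoc_pow ht0]
    rw [e0, e1, e2, e3, hxdef]
    simp only
    ring
  -- integrability of g
  have hgint : IntegrableOn g (Ioc 0 1) volume := by
    have : IntegrableOn (fun s => a * s ^ (a - 1) * c - a * s ^ (a - 1) * F s) (Ioc 0 1) volume :=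
      ((rpow_integrableOn ha 1).mul_const c).sub K1.1
    have h2 : IntegrableOn (fun s => a * s ^ (a - 1) * (c - F s)) (Ioc 0 1) volume := by
      apply this.congr
      refine Eventually.of_forall fun s => ?_
      simp only [Pi.sub_apply]
      ring
    exact h2.add hf
  -- a.e. identity for g
  have hgae : ∀ᵐ t ∂(volume.restrict (Ioc (0:ℝ) 1)), g t = -(k / t) * x t + f t := by
    refine (ae_restrict_iff' measurableSet_Ioc).2 (Eventually.of_forall fun t ht => ?_)
    rw [hgdef, hxdef]
    simp only
    have h1 : t ^ (a - 1) = t ^ a / t := by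
      rw [Real.rpow_sub ht.1, Real.rpow_one]
    rw [h1, hadef]
    field_simp
  -- integrability of |x|/t
  have hxint : IntegrableOn (fun t => |x t| / t) (Ioc 0 1) volume := by
    have h0 : IntegrableOn (fun s => a * s ^ (a - 1) * (c - F s)) (Ioc 0 1) volume := by
      apply (((rpow_integrableOn ha 1).mul_const c).sub K1.1).congr
      exact Eventually.of_forall fun s => by simp only [Pi.sub_apply]; ring
    have h1 : IntegrableOn (fun s => |a⁻¹ * (a * s ^ (a - 1) * (c - F s))|) (Ioc 0 1) volume :=
      (h0.const_mul a⁻¹).abs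
    apply h1.congr
    refine (ae_restrict_iff' measurableSet_Ioc).2 (Eventually.of_forall fun t ht => ?_)
    rw [hxdef]
    simp only
    rw [← mul_assoc, ← mul_assoc, inv_mul_cancel₀ (ne_of_gt ha), one_mul,
      abs_mul, abs_of_pos (Real.rpow_pos_of_pos ht.1 _), abs_mul,
      abs_of_pos (Real.rpow_pos_of_pos ht.1 _), Real.rpow_sub ht.1, Real.rpow_one]
    field_simp
  -- formula
  have hform : ∀ t ∈ Ioc (0:ℝ) 1, x t = t ^ |k| * (c - ∫ s in t..1, s ^ (-|k|) * f s) := by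
    intro t ht
    rw [hak, hxdef]
    simp only
    congr 2
    rw [intervalIntegral.integral_of_le ht.2, hFdef]
    apply integral_congr_ae
    have := ae_restrict_of_ae_restrict_of_subset (Ioc_subset_Ioc_left ht.1.le) hff₀
    filter_upwards [this] with s hs
    rw [hs]
  refine ⟨x, ⟨hx0, hx1, hxint, g, hgint, hrep, hgae⟩, ?_, hform⟩
  rintro y ⟨hy0, hy1, hyint, gy, hgyint, hyrep, hgyae⟩
  have hdint : IntegrableOn (fun s => gy s - g s) (Ioc 0 1) volume := hgyint.sub hgint
  obtain ⟨h₁, hh₁m, hdh₁⟩ : ∃ h₁, StronglyMeasurable h₁ ∧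
      (fun s => gy s - g s) =ᵐ[volume.restrict (Ioc (0:ℝ) 1)] h₁ :=
    ⟨hdint.1.mk _, hdint.1.stronglyMeasurable_mk, hdint.1.ae_eq_mk⟩
  set h₀ : ℝ → ℝ := (Ioc (0:ℝ) 1).indicator h₁ with hh₀def
  have hh₀m : Measurable h₀ := hh₁m.measurable.indicator measurableSet_Ioc
  have hdh₀ : (fun s => gy s - g s) =ᵐ[volume.restrict (Ioc (0:ℝ) 1)] h₀ :=
    hdh₁.trans (indicator_ae_eq_restrict measurableSet_Ioc).symm
  have hh₀i : Integrable h₀ (volume : Measure ℝ) := by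
    rw [hh₀def, integrable_indicator_iff measurableSet_Ioc]
    exact hdint.congr hdh₁
  set P : ℝ → ℝ := fun t => ∫ u in (0:ℝ)..t, h₀ u with hPdef
  have hPc : Continuous P :=
    intervalIntegral.continuous_primitive
      (fun p q => intervalIntegrable_iff.mpr hh₀i.integrableOn) 0
  have hyx : ∀ t ∈ Icc (0:ℝ) 1, y t - x t = P t := by
    intro t ht
    rw [hyrep t ht, hrep t ht]
    have hsub : Ioc (0:ℝ) t ⊆ Ioc (0:ℝ) 1 := Ioc_subset_Ioc_right ht.2
    rw [← integral_sub (hgyint.mono_set hsub) (hgint.mono_set hsub)]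
    rw [hPdef]
    simp only
    rw [intervalIntegral.integral_of_le ht.1]
    exact integral_congr_ae (ae_restrict_of_ae_restrict_of_subset hsub hdh₀)
  have hP1 : P 1 = 0 := by
    have h := hyx 1 ⟨zero_le_one, le_refl 1⟩
    rw [hy1, hx1] at h
    linarith
  have hback : ∀ t ∈ Ioc (0:ℝ) 1, P t = -∫ u in Ioc t 1, h₀ u := by
    intro t ht
    have hadj := intervalIntegral.integral_add_adjacent_intervals
      (a := (0:ℝ)) (b := t) (c := 1)
      (intervalIntegrable_iff.mpr hh₀i.integrableOn)
      (intervalIntegrable_iff.mpr hh₀i.integrableOn)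
    have h2 : P t + ∫ u in t..1, h₀ u = P 1 := hadj
    rw [hP1] at h2
    rw [← intervalIntegral.integral_of_le ht.2]
    linarith
  have haeh : ∀ᵐ s ∂(volume.restrict (Ioc (0:ℝ) 1)), h₀ s = a / s * P s := by
    filter_upwards [hdh₀, hgyae, hgae, ae_restrict_mem measurableSet_Ioc] with s e1 e2 e3 hs
    have e1' : gy s - g s = h₀ s := e1
    rw [← e1', e2, e3, ← hyx s (Ioc_subset_Icc_self hs)]
    have hs0 : s ≠ 0 := ne_of_gt hs.1
    rw [hadef]
    field_simp
    ring
  set W : ℝ → ℝ := fun s => |P s| / s with hWdef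
  have hWm : Measurable W := (hPc.abs.measurable).div measurable_id
  have hWnn : 0 ≤ᵐ[volume.restrict (Ioc (0:ℝ) 1)] W :=
    (ae_restrict_iff' measurableSet_Ioc).2
      (Eventually.of_forall fun s hs => div_nonneg (abs_nonneg _) hs.1.le)
  have hWint : IntegrableOn W (Ioc 0 1) volume := by
    apply Integrable.mono' (hyint.add hxint) hWm.aestronglyMeasurable.restrict
    refine (ae_restrict_iff' measurableSet_Ioc).2 (Eventually.of_forall fun s hs => ?_)
    have hs0 : 0 < s := hs.1
    have hPs : P s = y s - x s := (hyx s (Ioc_subset_Icc_self hs)).symm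
    rw [Real.norm_eq_abs, hWdef]
    simp only [Pi.add_apply]
    rw [abs_div, abs_abs, abs_of_pos hs0, hPs]
    calc |y s - x s| / s ≤ (|y s| + |x s|) / s := by
          gcongr
          exact abs_sub _ _
      _ = |y s| / s + |x s| / s := add_div _ _ _
  have hPW : ∀ t ∈ Ioc (0:ℝ) 1, |P t| ≤ a * ∫ s in Ioc t 1, W s := by
    intro t ht
    rw [hback t ht, abs_neg, ← Real.norm_eq_abs]
    have hsub : Ioc t 1 ⊆ Ioc (0:ℝ) 1 := Ioc_subset_Ioc_left ht.1.le
    calc ‖∫ u in Ioc t 1, h₀ u‖ ≤ ∫ u in Ioc t 1, ‖h₀ u‖ := norm_integral_le_integral_norm _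
      _ = ∫ u in Ioc t 1, a * W u := by
          apply integral_congr_ae
          filter_upwards [ae_restrict_of_ae_restrict_of_subset hsub haeh,
            ae_restrict_mem measurableSet_Ioc] with s e1 hs
          have hs0 : 0 < s := lt_trans ht.1 hs.1
          rw [Real.norm_eq_abs, e1, hWdef]
          simp only
          rw [abs_mul, abs_of_pos (div_pos ha hs0)]
          ring
      _ = a * ∫ s in Ioc t 1, W s := integral_const_mul _ _
  set C : ℝ := ∫ s in Ioc (0:ℝ) 1, W s with hCdef
  have Hind : ∀ n : ℕ, ∀ t ∈ Ioc (0:ℝ) 1,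
      (∫ s in Ioc t 1, W s) ≤ C * a ^ n * (Real.log t⁻¹) ^ n / n.factorial := by
    intro n
    induction n with
    | zero =>
      intro t ht
      simp only [pow_zero, Nat.factorial_zero, Nat.cast_one, mul_one, div_one]
      exact setIntegral_mono_set hWint hWnn (Ioc_subset_Ioc_left ht.1.le).eventuallyLE
    | succ n ih =>
      intro t ht
      have hL : ∀ s ∈ Ioc t 1, W s
          ≤ (C * a ^ n * a / ↑n.factorial) * ((Real.log s⁻¹) ^ n / s) := by
        intro s hs
        have hs0 : 0 < s := lt_trans ht.1 hs.1
        have hsIoc : s ∈ Ioc (0:ℝ) 1 := ⟨hs0, hs.2⟩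
        have h1 : |P s| ≤ a * ∫ u in Ioc s 1, W u := hPW s hsIoc
        have h2 : (∫ u in Ioc s 1, W u)
            ≤ C * a ^ n * (Real.log s⁻¹) ^ n / ↑n.factorial := ih s hsIoc
        have h3 : |P s| ≤ a * (C * a ^ n * (Real.log s⁻¹) ^ n / ↑n.factorial) :=
          le_trans h1 (mul_le_mul_of_nonneg_left h2 ha.le)
        have hWs : W s = |P s| / s := rfl
        rw [hWs]
        calc |P s| / s ≤ (a * (C * a ^ n * (Real.log s⁻¹) ^ n / ↑n.factorial)) / s := by
              gcongr
          _ = (C * a ^ n * a / ↑n.factorial) * ((Real.log s⁻¹) ^ n / s) := by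
              field_simp
      have hcont : ContinuousOn
          (fun s : ℝ => (C * a ^ n * a / ↑n.factorial) * ((Real.log s⁻¹) ^ n / s))
          (Icc t 1) := by
        simp only [Real.log_inv]
        apply ContinuousOn.mul continuousOn_const
        apply ContinuousOn.div
        · exact ((Real.continuousOn_log.mono
            (fun s hs => ne_of_gt (lt_of_lt_of_le ht.1 hs.1))).neg).pow n
        · exact continuousOn_id
        · exact fun s hs => ne_of_gt (lt_of_lt_of_le ht.1 hs.1)
      have hρint : IntegrableOn
          (fun s : ℝ => (C * a ^ n * a / ↑n.factorial) * ((Real.log s⁻¹) ^ n / s))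
          (Ioc t 1) volume :=
        (hcont.integrableOn_Icc).mono_set Ioc_subset_Icc_self
      calc (∫ s in Ioc t 1, W s)
          ≤ ∫ s in Ioc t 1, (C * a ^ n * a / ↑n.factorial) * ((Real.log s⁻¹) ^ n / s) :=
            setIntegral_mono_on (hWint.mono_set (Ioc_subset_Ioc_left ht.1.le)) hρint
              measurableSet_Ioc hL
        _ = (C * a ^ n * a / ↑n.factorial) * ∫ s in Ioc t 1, (Real.log s⁻¹) ^ n / s :=
            integral_const_mul _ _
        _ = (C * a ^ n * a / ↑n.factorial) * ((Real.log t⁻¹) ^ (n + 1) / (n + 1)) := by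
            rw [← intervalIntegral.integral_of_le ht.2, loglem n ht.1 ht.2]
        _ = C * a ^ (n + 1) * (Real.log t⁻¹) ^ (n + 1) / ↑(n + 1).factorial := by
            rw [Nat.factorial_succ]
            have h1 : (n.factorial : ℝ) ≠ 0 := Nat.cast_ne_zero.mpr n.factorial_ne_zero
            have h2 : ((n : ℝ) + 1) ≠ 0 := by positivity
            push_cast
            field_simp
            ring
  intro t ht
  rcases eq_or_lt_of_le ht.1 with h | h0
  · rw [← h, hy0, hx0]
  · have htI : t ∈ Ioc (0:ℝ) 1 := ⟨h0, ht.2⟩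
    have hψ0 : (∫ s in Ioc t 1, W s) = 0 := by
      have hnn : 0 ≤ ∫ s in Ioc t 1, W s :=
        setIntegral_nonneg measurableSet_Ioc
          (fun s hs => div_nonneg (abs_nonneg _) (lt_trans h0 hs.1).le)
      have hub : ∀ n : ℕ, (∫ s in Ioc t 1, W s)
          ≤ C * ((a * Real.log t⁻¹) ^ n / n.factorial) := by
        intro n
        calc (∫ s in Ioc t 1, W s)
            ≤ C * a ^ n * (Real.log t⁻¹) ^ n / ↑n.factorial := Hind n t htI
          _ = C * ((a * Real.log t⁻¹) ^ n / ↑n.factorial) := by rw [mul_pow]; ring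
      have htend : Tendsto (fun n : ℕ => C * ((a * Real.log t⁻¹) ^ n / n.factorial))
          atTop (𝓝 0) := by
        have h := (FloorSemiring.tendsto_pow_div_factorial_atTop
          (K := ℝ) (a * Real.log t⁻¹)).const_mul C
        simpa using h
      have h := ge_of_tendsto' htend hub
      linarith
    have hPt : P t = 0 := by
      have h := hPW t htI
      rw [hψ0, mul_zero] at h
      exact abs_eq_zero.mp (le_antisymm h (abs_nonneg _))
    have h := hyx t ht
    rw [hPt] at h
    linarith
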